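/- Let m ≥ 1 be a natural number and s_{2m} = 1/√(4m²+1). Then for every real x with 0 < x < s_{2m}, one has (−1)^m · T_{2m}(x) > 0 and (−1)^{m+1} · T_{2m}'(x) > 0. That is, if m is even then T_{2m}(x) > 0 and T_{2m}'(x) < 0 on (0, s_{2m}), while if m is odd then T_{2m}(x) < 0 and T_{2m}'(x) > 0 on (0, s_{2m}). -/

import Mathlib

open Polynomial

/-- For `m ≥ 1` and `0 < x < s_{2m} = 1/√(4m²+1)`, one has
`(−1)^m · T_{2m}(x) > 0` and `(−1)^{m+1} · T_{2m}'(x) > 0`. -/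
theorem chebyshev_sign_on_small_interval
    (m : ℕ) (hm : 1 ≤ m) (x : ℝ)
    (hx0 : 0 < x) (hx1 : x < 1 / Real.sqrt (4 * (m : ℝ) ^ 2 + 1)) :
    0 < (-1 : ℝ) ^ m * (Chebyshev.T ℝ (2 * m)).eval x ∧
    0 < (-1 : ℝ) ^ (m + 1) * (derivative (Chebyshev.T ℝ (2 * m))).eval x := by
  have hmR : (1 : ℝ) ≤ (m : ℝ) := by exact_mod_cast hm
  have hmpos : (0 : ℝ) < m := by linarith
  have hpi := Real.pi_pos
  -- sqrt (4m²+1) > 2m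
  have hs : 2 * (m : ℝ) < Real.sqrt (4 * (m : ℝ) ^ 2 + 1) := by
    rw [show (4 * (m : ℝ) ^ 2 + 1) = (2 * m) ^ 2 + 1 by ring]
    nlinarith [Real.sq_sqrt (by positivity : (0:ℝ) ≤ (2 * (m:ℝ)) ^ 2 + 1),
      Real.sqrt_nonneg ((2 * (m:ℝ)) ^ 2 + 1)]
  have hx2 : x < 1 / (2 * m) := by
    calc x < 1 / Real.sqrt (4 * (m : ℝ) ^ 2 + 1) := hx1
    _ < 1 / (2 * m) := by
        apply one_div_lt_one_div_of_lt (by positivity) hs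
  have hx1' : x ≤ 1 := by
    have : 1 / (2 * (m : ℝ)) ≤ 1 / 2 := by
      apply one_div_le_one_div_of_le <;> linarith
    linarith
  set θ := Real.arccos x with hθ
  have hcos : Real.cos θ = x := Real.cos_arccos (by linarith) hx1'
  have hθlt : θ < Real.pi / 2 := Real.arccos_lt_pi_div_two.2 hx0
  -- lower bound on θ
  have hθgt : Real.pi / 2 - Real.pi / (4 * m) < θ := by
    have h1 : Real.cos (Real.pi / 2 - Real.pi / (4 * m)) = Real.sin (Real.pi / (4 * m)) :=
      Real.cos_pi_div_two_sub _
    have h2 : 1 / (2 * (m : ℝ)) ≤ Real.sin (Real.pi / (4 * m)) := by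
      have := Real.mul_le_sin (x := Real.pi / (4 * m)) (by positivity)
        (by rw [div_le_div_iff₀ (by positivity) (by norm_num)]; nlinarith)
      calc 1 / (2 * (m : ℝ)) = 2 / Real.pi * (Real.pi / (4 * m)) := by
            field_simp; ring
        _ ≤ _ := this
    have hcoslt : Real.cos θ < Real.cos (Real.pi / 2 - Real.pi / (4 * m)) := by
      rw [hcos, h1]; linarith
    have hmem1 : Real.pi / 2 - Real.pi / (4 * m) ∈ Set.Icc 0 Real.pi := by
      constructor
      · have : Real.pi / (4 * (m : ℝ)) ≤ Real.pi / 2 := by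
          apply div_le_div_of_nonneg_left hpi.le (by norm_num); linarith
        linarith
      · have hp4 : 0 < Real.pi / (4 * (m:ℝ)) := by positivity
        linarith
    have hmem2 : θ ∈ Set.Icc 0 Real.pi := ⟨Real.arccos_nonneg x, Real.arccos_le_pi x⟩
    exact (Real.strictAntiOn_cos.lt_iff_gt hmem2 hmem1).1 hcoslt
  have hθ0 : 0 < θ := by
    have : Real.pi / (4 * (m : ℝ)) ≤ Real.pi / 4 := by
      apply div_le_div_of_nonneg_left hpi.le (by norm_num); linarith
    nlinarith
  set t := (m : ℝ) * Real.pi - 2 * m * θ with htdef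
  have ht0 : 0 < t := by
    have : 2 * (m : ℝ) * θ < 2 * m * (Real.pi / 2) := by
      apply mul_lt_mul_of_pos_left hθlt (by positivity)
    simp only [htdef]; nlinarith
  have ht1 : t < Real.pi / 2 := by
    have h := mul_lt_mul_of_pos_left hθgt (show (0:ℝ) < 2 * m by positivity)
    have : 2 * (m:ℝ) * (Real.pi / 2 - Real.pi / (4 * m)) = m * Real.pi - Real.pi / 2 := by
      field_simp; ring
    simp only [htdef]; nlinarith
  have hcost : 0 < Real.cos t := Real.cos_pos_of_mem_Ioo ⟨by linarith, ht1⟩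
  have hsint : 0 < Real.sin t := Real.sin_pos_of_pos_of_lt_pi ht0 (by linarith)
  have hsinθ : 0 < Real.sin θ := Real.sin_pos_of_pos_of_lt_pi hθ0 (by linarith)
  have hneg1 : ((-1 : ℝ)) ^ m * (-1) ^ m = 1 := by
    rw [← pow_add]; exact Even.neg_one_pow ⟨m, rfl⟩
  -- evaluate T
  have hT : (Chebyshev.T ℝ (2 * m)).eval x = (-1) ^ m * Real.cos t := by
    rw [← hcos, Polynomial.Chebyshev.T_real_cos]
    have : ((2 * (m : ℤ) : ℤ) : ℝ) * θ = (m : ℕ) * Real.pi - t := by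
      push_cast; simp only [htdef]; ring
    rw [this, Real.cos_nat_mul_pi_sub]
  constructor
  · rw [hT, ← mul_assoc, hneg1, one_mul]; exact hcost
  · -- derivative
    have hU := Polynomial.Chebyshev.U_real_cos θ (2 * m - 1)
    have harg : (((2 * (m : ℤ) - 1 : ℤ) : ℝ) + 1) * θ = (m : ℕ) * Real.pi - t := by
      push_cast; simp only [htdef]; ring
    rw [harg, Real.sin_nat_mul_pi_sub] at hU
    have hD : (derivative (Chebyshev.T ℝ (2 * m))).eval x
        = 2 * m * ((Chebyshev.U ℝ (2 * m - 1)).eval (Real.cos θ)) := by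
      rw [Polynomial.Chebyshev.T_derivative_eq_U]
      rw [← hcos]
      push_cast
      simp
    have hUval : (Chebyshev.U ℝ (2 * m - 1)).eval (Real.cos θ)
        = -((-1) ^ m * Real.sin t) / Real.sin θ := by
      rw [eq_div_iff hsinθ.ne']
      exact hU
    rw [hD, hUval, pow_succ]
    have key : (-1 : ℝ) ^ m * -1 * (2 * ↑m * (-((-1) ^ m * Real.sin t) / Real.sin θ))
        = ((-1 : ℝ) ^ m * (-1) ^ m) * (2 * ↑m * Real.sin t / Real.sin θ) := by
      ring
    rw [key, hneg1, one_mul]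
    positivity
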